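/- Let D ⊆ ℂ be an unbounded open connected set and f : D → ℂ a holomorphic function satisfying P(z, f(z)) = 0 on D for some nonzero polynomial P ∈ ℂ[X,Y]. Then there exist an integer m ≥ 0 and constants C, R ≥ 1 such that |f(z)| ≤ C(1 + |z|^m) for all z ∈ D with |z| ≥ R. -/

import Mathlib

open Polynomial Filter Finset

lemma root_bound {n : ℕ} (hn : 0 < n) (a : ℕ → ℂ) (w : ℂ)
    (h : ∑ j ∈ Finset.range (n+1), a j * w ^ j = 0) (hw : 1 ≤ ‖w‖) :
    ‖a n‖ * ‖w‖ ≤ ∑ j ∈ Finset.range n, ‖a j‖ := by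
  have hw0 : (0:ℝ) < ‖w‖ := lt_of_lt_of_le one_pos hw
  rw [Finset.sum_range_succ] at h
  have h1 : a n * w ^ n = -∑ j ∈ Finset.range n, a j * w ^ j := by linear_combination h
  have h2 : ‖a n‖ * ‖w‖ ^ n ≤
      ∑ j ∈ Finset.range n, ‖a j‖ * ‖w‖ ^ j := by
    calc ‖a n‖ * ‖w‖ ^ n = ‖a n * w ^ n‖ := by
          rw [norm_mul, norm_pow]
      _ = ‖∑ j ∈ Finset.range n, a j * w ^ j‖ := by rw [h1, norm_neg]
      _ ≤ ∑ j ∈ Finset.range n, ‖a j * w ^ j‖ := norm_sum_le _ _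
      _ = _ := by simp [map_mul, map_pow]
  have h3 : ∑ j ∈ Finset.range n, ‖a j‖ * ‖w‖ ^ j ≤
      (∑ j ∈ Finset.range n, ‖a j‖) * ‖w‖ ^ (n-1) := by
    rw [Finset.sum_mul]
    apply Finset.sum_le_sum
    intro j hj
    have := pow_le_pow_right₀ hw (Nat.le_sub_one_of_lt (Finset.mem_range.mp hj))
    exact mul_le_mul_of_nonneg_left this (norm_nonneg _)
  have hpow : ‖a n‖ * ‖w‖ ^ n
      = (‖a n‖ * ‖w‖) * ‖w‖ ^ (n-1) := by
    rw [mul_assoc, ← pow_succ']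
    congr 2
    omega
  have h4 : (‖a n‖ * ‖w‖) * ‖w‖ ^ (n-1) ≤
      (∑ j ∈ Finset.range n, ‖a j‖) * ‖w‖ ^ (n-1) := by
    rw [← hpow]; exact h2.trans h3
  exact le_of_mul_le_mul_right h4 (pow_pos hw0 _)

lemma poly_growth (p : Polynomial ℂ) (m : ℕ) (hm : p.natDegree ≤ m) (z : ℂ)
    (hz : 1 ≤ ‖z‖) :
    ‖p.eval z‖ ≤ (∑ i ∈ Finset.range (m+1), ‖p.coeff i‖) * ‖z‖ ^ m := by
  rw [Polynomial.eval_eq_sum_range' (Nat.lt_succ_of_le hm)]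
  calc ‖∑ i ∈ Finset.range (m+1), p.coeff i * z ^ i‖
      ≤ ∑ i ∈ Finset.range (m+1), ‖p.coeff i * z ^ i‖ :=
        norm_sum_le _ _
    _ ≤ ∑ i ∈ Finset.range (m+1), ‖p.coeff i‖ * ‖z‖ ^ m := by
        apply Finset.sum_le_sum
        intro i hi
        rw [norm_mul, norm_pow]
        exact mul_le_mul_of_nonneg_left
          (pow_le_pow_right₀ hz (Nat.lt_succ_iff.mp (Finset.mem_range.mp hi)))
          (norm_nonneg _)
    _ = _ := by rw [← Finset.sum_mul]

lemma exists_lower (p : Polynomial ℂ) (hp : p ≠ 0) :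
    ∃ c > (0:ℝ), ∃ R ≥ (1:ℝ), ∀ z : ℂ, R ≤ ‖z‖ → c ≤ ‖p.eval z‖ := by
  rcases le_or_gt p.degree 0 with hd | hd
  · obtain ⟨a, rfl⟩ : ∃ a, p = Polynomial.C a := ⟨p.coeff 0, Polynomial.eq_C_of_degree_le_zero hd⟩
    refine ⟨‖a‖, ?_, 1, le_refl _, fun z _ => by simp⟩
    simpa using hp
  · have ht : Tendsto (fun z : ℂ => ‖p.eval z‖) (comap norm atTop) atTop :=
      p.tendsto_norm_atTop hd tendsto_comap
    have hev : ∀ᶠ z : ℂ in comap norm atTop, 1 ≤ ‖p.eval z‖ := ht.eventually_ge_atTop 1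
    rw [Filter.eventually_comap] at hev
    rw [Filter.eventually_atTop] at hev
    obtain ⟨b, hb⟩ := hev
    refine ⟨1, one_pos, max 1 b, le_max_left _ _, fun z hz => ?_⟩
    have : 1 ≤ ‖p.eval z‖ := hb ‖z‖ (le_trans (le_max_right 1 b)
      hz) z rfl
    exact this

-- key evaluation compatibility
lemma eval_key (P : MvPolynomial (Fin 2) ℂ) (z w : ℂ) :
    Polynomial.eval w (Polynomial.map (Polynomial.evalRingHom z)
      (MvPolynomial.aeval ![Polynomial.C Polynomial.X, Polynomial.X] P))
      = MvPolynomial.eval ![z, w] P := by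
  induction P using MvPolynomial.induction_on with
  | C a => simp
  | add p q hp hq => simp [hp, hq]
  | mul_X p i hp =>
      simp only [map_mul, Polynomial.eval_mul, hp]
      fin_cases i <;> simp [hp]


/-- **Polynomial bounds for complex Nash functions.** If `D ⊆ ℂ` is an unbounded open
connected set and `f` is holomorphic on `D` satisfying a nonzero polynomial identity
`P(z, f z) = 0` on `D`, then there are `m : ℕ` and constants `C, R ≥ 1` with
`|f z| ≤ C (1 + |z|^m)` for all `z ∈ D` with `|z| ≥ R`. -/
theorem stmt_7 (D : Set ℂ) (hopen : IsOpen D) (hconn : IsConnected D)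
    (hunb : ¬ Bornology.IsBounded D)
    (f : ℂ → ℂ) (hf : DifferentiableOn ℂ f D)
    (P : MvPolynomial (Fin 2) ℂ) (hP : P ≠ 0)
    (hPf : ∀ z ∈ D, MvPolynomial.eval ![z, f z] P = 0) :
    ∃ (m : ℕ) (C R : ℝ), 1 ≤ C ∧ 1 ≤ R ∧
      ∀ z ∈ D, R ≤ ‖z‖ →
        ‖f z‖ ≤ C * (1 + ‖z‖ ^ m) := by
  set Q : Polynomial (Polynomial ℂ) :=
    MvPolynomial.aeval ![Polynomial.C Polynomial.X, Polynomial.X] P with hQdef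
  have hkey : ∀ z w : ℂ, Polynomial.eval w (Q.map (Polynomial.evalRingHom z))
      = MvPolynomial.eval ![z, w] P := fun z w => eval_key P z w
  have hQ0 : Q ≠ 0 := by
    intro h0
    apply hP
    apply MvPolynomial.funext
    intro x
    have hx : x = ![x 0, x 1] := by funext i; fin_cases i <;> rfl
    rw [map_zero, hx, ← hkey (x 0) (x 1), h0]
    simp
  set n := Q.natDegree with hn
  rcases Nat.eq_zero_or_pos n with h0 | hpos
  · exfalso
    have hQC : Q = Polynomial.C (Q.coeff 0) := Polynomial.eq_C_of_natDegree_eq_zero h0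
    have hc : Q.coeff 0 ≠ 0 := by
      intro h; apply hQ0; rw [hQC, h, map_zero]
    have hsub : D ⊆ {x | (Q.coeff 0).IsRoot x} := by
      intro z hz
      have h1 := hPf z hz
      rw [← hkey z (f z), hQC] at h1
      simpa using h1
    exact hunb ((Polynomial.finite_setOf_isRoot hc).subset hsub).isBounded
  · have han : Q.coeff n ≠ 0 := by
      rw [hn, Polynomial.coeff_natDegree]; exact Polynomial.leadingCoeff_ne_zero.mpr hQ0
    obtain ⟨c, hc, R1, hR1, hlow⟩ := exists_lower (Q.coeff n) han
    set m := Finset.sup (Finset.range n) fun j => (Q.coeff j).natDegree with hm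
    set K := ∑ j ∈ Finset.range n, ∑ i ∈ Finset.range (m+1),
      ‖(Q.coeff j).coeff i‖ with hK
    have hK0 : 0 ≤ K := Finset.sum_nonneg fun j _ =>
      Finset.sum_nonneg fun i _ => norm_nonneg _
    refine ⟨m, max 1 (K/c), max 1 R1, le_max_left _ _, le_max_left _ _, ?_⟩
    intro z hz hzR
    have hz1 : (1:ℝ) ≤ ‖z‖ := le_trans (le_max_left _ _) hzR
    have hC1 : (1:ℝ) ≤ max 1 (K/c) := le_max_left _ _
    have hzm : (0:ℝ) ≤ ‖z‖ ^ m := pow_nonneg (norm_nonneg _) m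
    have hzm1 : (1:ℝ) ≤ ‖z‖ ^ m := one_le_pow₀ hz1
    rcases le_total (‖f z‖) 1 with hw | hw
    · nlinarith
    · have heval : (Q.map (evalRingHom z)).eval (f z) = 0 := by
        rw [hkey]; exact hPf z hz
      have hsum : ∑ j ∈ Finset.range (n+1), ((Q.coeff j).eval z) * (f z)^j = 0 := by
        rw [← heval, Polynomial.eval_eq_sum_range'
          (Nat.lt_succ_of_le Polynomial.natDegree_map_le)]
        apply Finset.sum_congr rfl
        intro j _
        rw [Polynomial.coeff_map, Polynomial.coe_evalRingHom]
      have hrb := root_bound hpos (fun j => (Q.coeff j).eval z) (f z) hsum hw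
      have hcz : c ≤ ‖(Q.coeff n).eval z‖ :=
        hlow z (le_trans (le_max_right 1 R1) hzR)
      have hsumK : ∑ j ∈ Finset.range n, ‖(Q.coeff j).eval z‖
          ≤ K * ‖z‖ ^ m := by
        rw [hK, Finset.sum_mul]
        apply Finset.sum_le_sum
        intro j hj
        exact poly_growth (Q.coeff j) m (Finset.le_sup (f := fun j => (Q.coeff j).natDegree) hj) z hz1
      have h5 : c * ‖f z‖ ≤ K * ‖z‖ ^ m := by
        calc c * ‖f z‖
            ≤ ‖(Q.coeff n).eval z‖ * ‖f z‖ :=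
              mul_le_mul_of_nonneg_right hcz (norm_nonneg _)
          _ ≤ ∑ j ∈ Finset.range n, ‖(Q.coeff j).eval z‖ := hrb
          _ ≤ K * ‖z‖ ^ m := hsumK
      have h6 : ‖f z‖ ≤ (K/c) * ‖z‖ ^ m := by
        rw [div_mul_eq_mul_div, le_div_iff₀ hc]
        nlinarith
      calc ‖f z‖ ≤ (K/c) * ‖z‖ ^ m := h6
        _ ≤ max 1 (K/c) * (1 + ‖z‖ ^ m) := by
            have := le_max_right 1 (K/c)
            nlinarith
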